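/- With notation as in the coefficient lemma (a_n = (n+1)q_{n+1}/n! − q_n/(n−1)!, k q_k ≤ (k+1)q_{k+1} for all 1 ≤ k ≤ M−1, q_{M+1} = 0, q_M > 0), the tail coefficients c_k = τ ∑_{n=0}^{M} a_n/(k−n)! for k ≥ M satisfy c_k = (τ/k!) ∑_{n=0}^{M} C(k,n) ((n+1)q_{n+1} − n q_n), and c_k < 0 for all sufficiently large k. -/

import Mathlib

open Finset

lemma choose_mono_half (k : ℕ) : ∀ b, ∀ a, a ≤ b → b ≤ k / 2 → k.choose a ≤ k.choose b := by
  intro b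
  induction b with
  | zero => intro a ha _; simp [Nat.le_zero.mp ha]
  | succ b ih =>
    intro a ha hb
    rcases Nat.eq_or_lt_of_le ha with h | h
    · simp [h]
    · exact le_trans (ih a (Nat.lt_succ_iff.mp h) (le_trans (Nat.le_succ b) hb))
        (Nat.choose_le_succ_of_lt_half_left (lt_of_lt_of_le (Nat.lt_succ_self b) hb))

theorem stmt_9 (M : ℕ) (q : ℕ → ℝ) (τ : ℝ)
    (hM : 1 ≤ M)
    (hq : ∀ k, 1 ≤ k → k ≤ M → 0 ≤ q k)
    (hq0 : q 0 = 0) (hqM1 : q (M + 1) = 0) (hqM : 0 < q M)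
    (hmono : ∀ k, 1 ≤ k → k ≤ M - 1 → (k : ℝ) * q k ≤ (k + 1 : ℝ) * q (k + 1))
    (hτ : 1 ≤ τ)
    (a c : ℕ → ℝ)
    (ha : ∀ n, a n = ((n + 1 : ℝ) * q (n + 1) - (n : ℝ) * q n) / n.factorial)
    (hc : ∀ k, M ≤ k → c k = τ * ∑ n ∈ Finset.range (M + 1), a n / (k - n).factorial) :
    (∀ k, M ≤ k →
        c k = τ / k.factorial *
          ∑ n ∈ Finset.range (M + 1),
            (k.choose n : ℝ) * ((n + 1 : ℝ) * q (n + 1) - (n : ℝ) * q n)) ∧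
    (∃ K, ∀ k, K ≤ k → c k < 0) := by
  set b : ℕ → ℝ := fun n => (n + 1 : ℝ) * q (n + 1) - (n : ℝ) * q n with hb
  have hpart1 : ∀ k, M ≤ k →
      c k = τ / k.factorial * ∑ n ∈ Finset.range (M + 1), (k.choose n : ℝ) * b n := by
    intro k hk
    rw [hc k hk, Finset.mul_sum, Finset.mul_sum]
    refine Finset.sum_congr rfl ?_
    intro n hn
    have hnk : n ≤ k := le_trans (Nat.lt_succ_iff.mp (Finset.mem_range.mp hn)) hk
    have hfac : (k.choose n : ℝ) * n.factorial * (k - n).factorial = k.factorial := by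
      exact_mod_cast Nat.choose_mul_factorial_mul_factorial hnk
    rw [ha n]
    have h1 : (n.factorial : ℝ) ≠ 0 := Nat.cast_ne_zero.mpr n.factorial_ne_zero
    have h2 : ((k - n).factorial : ℝ) ≠ 0 := Nat.cast_ne_zero.mpr (k - n).factorial_ne_zero
    have h3 : (k.factorial : ℝ) ≠ 0 := Nat.cast_ne_zero.mpr k.factorial_ne_zero
    field_simp
    linear_combination -(((n + 1 : ℝ) * q (n + 1) - (n : ℝ) * q n) * hfac)
  refine ⟨hpart1, ?_⟩
  set B : ℝ := ∑ n ∈ Finset.range M, |b n| with hB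
  have hBnn : 0 ≤ B := Finset.sum_nonneg fun n _ => abs_nonneg _
  refine ⟨2 * M + M + ⌈B / q M⌉₊ + 1, ?_⟩
  intro k hk
  have hk2M : 2 * M ≤ k := by omega
  have hkM : M ≤ k := by omega
  rw [hpart1 k hkM]
  have hτpos : (0:ℝ) < τ := lt_of_lt_of_le one_pos hτ
  have hfacpos : (0:ℝ) < k.factorial := Nat.cast_pos.mpr k.factorial_pos
  have hcoefpos : (0:ℝ) < τ / k.factorial := div_pos hτpos hfacpos
  have hbM : b M = -(M * q M) := by simp [hb, hqM1]
  rw [Finset.sum_range_succ]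
  -- bound the head sum
  have hhalf : M - 1 ≤ k / 2 := by omega
  have hhead : ∑ n ∈ Finset.range M, (k.choose n : ℝ) * b n ≤ (k.choose (M - 1) : ℝ) * B := by
    rw [hB, Finset.mul_sum]
    refine Finset.sum_le_sum ?_
    intro n hn
    have hn' : n ≤ M - 1 := by
      have := Finset.mem_range.mp hn; omega
    calc (k.choose n : ℝ) * b n ≤ (k.choose n : ℝ) * |b n| :=
          mul_le_mul_of_nonneg_left (le_abs_self _) (Nat.cast_nonneg _)
      _ ≤ (k.choose (M - 1) : ℝ) * |b n| := by
          apply mul_le_mul_of_nonneg_right _ (abs_nonneg _)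
          exact_mod_cast choose_mono_half k (M - 1) n hn' hhalf
  have hid : (k.choose M : ℝ) * M = (k.choose (M - 1) : ℝ) * ((k : ℝ) - (M - 1 : ℕ)) := by
    have h := Nat.choose_succ_right_eq k (M - 1)
    have hM1 : M - 1 + 1 = M := by omega
    rw [hM1] at h
    have h' : ((k.choose M * M : ℕ) : ℝ) = ((k.choose (M - 1) * (k - (M - 1)) : ℕ) : ℝ) := by
      norm_cast
    push_cast [Nat.cast_sub (by omega : M - 1 ≤ k)] at h'
    push_cast
    linarith
  have hchpos : (0:ℝ) < (k.choose (M - 1) : ℝ) :=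
    Nat.cast_pos.mpr (Nat.choose_pos (by omega))
  have hkey : B < ((k : ℝ) - (M - 1 : ℕ)) * q M := by
    have hceil : B / q M ≤ ⌈B / q M⌉₊ := Nat.le_ceil _
    have h1 : (⌈B / q M⌉₊ : ℝ) + 1 ≤ (k : ℝ) - (M - 1 : ℕ) := by
      have : (M - 1 : ℕ) + ⌈B / q M⌉₊ + 1 ≤ k := by omega
      have := Nat.cast_le (α := ℝ).mpr this
      push_cast at this ⊢
      linarith
    have h2 : B / q M < (k : ℝ) - (M - 1 : ℕ) := by linarith
    calc B = B / q M * q M := by field_simp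
      _ < ((k : ℝ) - (M - 1 : ℕ)) * q M := by
          exact mul_lt_mul_of_pos_right h2 hqM
  have hsum : ∑ n ∈ Finset.range M, (k.choose n : ℝ) * b n + (k.choose M : ℝ) * b M < 0 := by
    rw [hbM]
    have : (k.choose M : ℝ) * (M * q M) = (k.choose (M - 1) : ℝ) * (((k : ℝ) - (M - 1 : ℕ)) * q M) := by
      rw [← mul_assoc, ← mul_assoc, hid]
    nlinarith [mul_lt_mul_of_pos_left hkey hchpos]
  exact mul_neg_of_pos_of_neg hcoefpos hsum
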